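/- Let G be a connected graph on vertices v₁,…,vₙ with independence number α(G) ≤ α, where α is a positive integer and G has no isolated vertices. Construct G_α as follows: for each i, let V_i = {v_{i,1},…,v_{i,α}} be a clique; for each edge v_iv_j of G, add a complete bipartite graph between V_i and V_j; for each i,j add a pendant vertex u_{i,j} adjacent to v_{i,j}; add vertices w₁,…,w_α, with w_j adjacent to u_{1,j},…,u_{n,j}. Then G_α is 1-tough. -/

import Mathlib

open SimpleGraph

/-- Number of connected components after deleting vertex set `S`. -/
noncomputable def numComp {V : Type*} (G : SimpleGraph V) (S : Set V) : ℕ :=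
  Nat.card (G.induce (Sᶜ : Set V)).ConnectedComponent

/-- `S` is a cutset: its removal leaves more than one component. -/
def IsCutset {V : Type*} (G : SimpleGraph V) (S : Set V) : Prop :=
  1 < numComp G S

/-- `G` is `t`-tough: every cutset `S` leaves at most `|S|/t` components.
Equivalently `τ(G) ≥ t` (for `t > 0`). -/
def IsTTough {V : Type*} (t : ℚ) (G : SimpleGraph V) : Prop :=
  ∀ S : Set V, IsCutset G S → t * (numComp G S : ℚ) ≤ (Nat.card S : ℚ)

/-- `τ(G) = t`: `G` is `t`-tough and `t` is the largest such value. -/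
def ToughnessEq {V : Type*} (G : SimpleGraph V) (t : ℚ) : Prop :=
  IsTTough t G ∧ ∀ t' : ℚ, IsTTough t' G → t' ≤ t

/-- The toughness of `G` equals `t`, characterized as the minimum of
`|S|/ω(G−S)` over cutsets `S` (valid for connected noncomplete graphs). -/
def ToughnessMin {V : Type*} (G : SimpleGraph V) (t : ℚ) : Prop :=
  IsLeast {q : ℚ | ∃ S : Set V, IsCutset G S ∧
    q = (Nat.card S : ℚ) / (numComp G S : ℚ)} t

/-- `G` is minimally `t`-tough. -/
def MinTough {V : Type*} (t : ℚ) (G : SimpleGraph V) : Prop :=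
  ToughnessEq G t ∧ ∀ e ∈ G.edgeSet, ¬ IsTTough t (G.deleteEdges {e})

/-- `G` is almost minimally 1-tough: `τ(G) ≥ 1` and `τ(G−e) < 1` for all edges. -/
def AlmostMinOneTough {V : Type*} (G : SimpleGraph V) : Prop :=
  IsTTough 1 G ∧ ∀ e ∈ G.edgeSet, ¬ IsTTough 1 (G.deleteEdges {e})

/-- The independence number of `G`. -/
noncomputable def indepNum {V : Type*} [Fintype V] (G : SimpleGraph V) : ℕ :=
  sSup {n | ∃ s : Set V, s.Pairwise (fun x y => ¬ G.Adj x y) ∧ Nat.card s = n}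

/-- `G` is α-critical: deleting any edge increases the independence number. -/
def AlphaCritical {V : Type*} [Fintype V] (G : SimpleGraph V) : Prop :=
  ∀ e ∈ G.edgeSet, _root_.indepNum G < _root_.indepNum (G.deleteEdges {e})

/-- The construction `G_α`: each vertex `i` of `G` is replaced by a clique
`V_i = {i} × Fin α`; edges of `G` become complete bipartite graphs between the
corresponding cliques; each `v_{i,j}` gets a pendant neighbor `u_{i,j}`; and
each hub vertex `w_j` is adjacent to all `u_{i,j}`. -/
def Galpha {V : Type*} (G : SimpleGraph V) (α : ℕ) :
    SimpleGraph ((V × Fin α) ⊕ ((V × Fin α) ⊕ Fin α)) :=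
  SimpleGraph.fromRel (fun x y =>
    match x, y with
    | Sum.inl p, Sum.inl q => p.1 = q.1 ∨ G.Adj p.1 q.1
    | Sum.inl p, Sum.inr (Sum.inl q) => p = q
    | Sum.inr (Sum.inl p), Sum.inr (Sum.inr j) => p.2 = j
    | _, _ => False)

namespace Stmt10Aux
variable {V : Type*} {G : SimpleGraph V} {α : ℕ}

abbrev vA (i : V) (j : Fin α) : (V × Fin α) ⊕ ((V × Fin α) ⊕ Fin α) := Sum.inl (i, j)
abbrev uA (i : V) (j : Fin α) : (V × Fin α) ⊕ ((V × Fin α) ⊕ Fin α) := Sum.inr (Sum.inl (i, j))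
abbrev wA (j : Fin α) : (V × Fin α) ⊕ ((V × Fin α) ⊕ Fin α) := Sum.inr (Sum.inr j)

lemma adj_vv {i i' : V} {j j' : Fin α} (h : i = i' ∨ G.Adj i i') (hne : (i,j) ≠ (i',j')) :
    (Galpha G α).Adj (vA i j) (vA i' j') := by
  simp only [Galpha, fromRel_adj]
  exact ⟨by simpa using hne, Or.inl h⟩

lemma adj_vu (i : V) (j : Fin α) : (Galpha G α).Adj (vA i j) (uA i j) := by
  simp only [Galpha, fromRel_adj]
  exact ⟨by simp, Or.inl trivial⟩

lemma adj_uw (i : V) (j : Fin α) : (Galpha G α).Adj (uA i j) (wA j) := by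
  simp only [Galpha, fromRel_adj]
  exact ⟨by simp, Or.inl trivial⟩

variable (G α) in
/-- The component of a surviving vertex. -/
noncomputable def mkc (S : Set ((V × Fin α) ⊕ ((V × Fin α) ⊕ Fin α)))
    (x : (V × Fin α) ⊕ ((V × Fin α) ⊕ Fin α)) (hx : x ∉ S) :
    ((Galpha G α).induce (Sᶜ : Set _)).ConnectedComponent :=
  connectedComponentMk _ ⟨x, hx⟩

lemma mkc_congr {S : Set ((V × Fin α) ⊕ ((V × Fin α) ⊕ Fin α))} {x y} (hx : x ∉ S) (hy : y ∉ S)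
    (h : x = y) : mkc G α S x hx = mkc G α S y hy := by subst h; rfl

lemma mkc_step {S : Set ((V × Fin α) ⊕ ((V × Fin α) ⊕ Fin α))} {x y} (hx : x ∉ S) (hy : y ∉ S)
    (h : (Galpha G α).Adj x y) : mkc G α S x hx = mkc G α S y hy := by
  apply ConnectedComponent.sound
  exact Adj.reachable (by simpa [comap_adj] using h)

variable (G α) in
def P1 (S : Set ((V × Fin α) ⊕ ((V × Fin α) ⊕ Fin α)))
    (c : ((Galpha G α).induce (Sᶜ : Set _)).ConnectedComponent) : Prop :=
  ∃ i j, ∃ h : vA i j ∉ S, mkc G α S (vA i j) h = c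

variable (G α) in
def P2 (S : Set ((V × Fin α) ⊕ ((V × Fin α) ⊕ Fin α)))
    (c : ((Galpha G α).induce (Sᶜ : Set _)).ConnectedComponent) : Prop :=
  ∃ j, ∃ h : wA j ∉ S, mkc G α S (wA j) h = c

lemma classify {S : Set ((V × Fin α) ⊕ ((V × Fin α) ⊕ Fin α))}
    (c : ((Galpha G α).induce (Sᶜ : Set _)).ConnectedComponent) :
    P1 G α S c ∨ P2 G α S c ∨
      (∃ i j, ∃ h : uA i j ∉ S, mkc G α S (uA i j) h = c ∧ vA i j ∈ S ∧ wA j ∈ S) := by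
  classical
  obtain ⟨x, hx⟩ := Quot.exists_rep c
  obtain ⟨(⟨i,j⟩ | ⟨⟨i,j⟩ | j⟩), hxS⟩ := x
  · exact Or.inl ⟨i, j, hxS, hx⟩
  · by_cases hv : vA i j ∈ S
    · by_cases hw : wA j ∈ S
      · exact Or.inr (Or.inr ⟨i, j, hxS, hx, hv, hw⟩)
      · exact Or.inr (Or.inl ⟨j, hw, (mkc_step hw hxS (adj_uw i j).symm).trans hx⟩)
    · exact Or.inl ⟨i, j, hv, (mkc_step hv hxS (adj_vu i j)).trans hx⟩
  · exact Or.inr (Or.inl ⟨j, hxS, hx⟩)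

lemma hubBlock {S : Set ((V × Fin α) ⊕ ((V × Fin α) ⊕ Fin α))}
    {c : ((Galpha G α).induce (Sᶜ : Set _)).ConnectedComponent}
    (h1 : ¬ P1 G α S c) {j : Fin α} (hw : wA j ∉ S) (hc : mkc G α S (wA j) hw = c)
    (i : V) : uA i j ∈ S ∨ vA i j ∈ S := by
  by_contra hcon
  push_neg at hcon
  obtain ⟨hu, hv⟩ := hcon
  exact h1 ⟨i, j, hv, ((mkc_step hv hu (adj_vu i j)).trans
    (mkc_step hu hw (adj_uw i j))).trans hc⟩

lemma coreConnB {S : Set ((V × Fin α) ⊕ ((V × Fin α) ⊕ Fin α))}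
    (hconn : G.Connected) (hP : ∀ i : V, ∃ j : Fin α, vA i j ∉ S)
    {i i' : V} {j j' : Fin α} (h : vA i j ∉ S) (h' : vA i' j' ∉ S) :
    mkc G α S (vA i j) h = mkc G α S (vA i' j') h' := by
  have same : ∀ (a : V) (ja jb : Fin α) (ha : vA a ja ∉ S) (hb : vA a jb ∉ S),
      mkc G α S (vA a ja) ha = mkc G α S (vA a jb) hb := by
    intro a ja jb ha hb
    rcases eq_or_ne ja jb with rfl | hne
    · rfl
    · exact mkc_step ha hb (adj_vv (Or.inl rfl) (by simp [hne]))
  obtain ⟨p⟩ := hconn.preconnected i i'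
  induction p generalizing j with
  | nil => exact same _ _ _ h h'
  | @cons a b d hadj p ih =>
    obtain ⟨jb, hjb⟩ := hP b
    have h1 : mkc G α S (vA a j) h = mkc G α S (vA b jb) hjb :=
      mkc_step h hjb (adj_vv (Or.inr hadj) (by simp [hadj.ne]))
    exact h1.trans (ih hjb h')

lemma coreCard {S : Set ((V × Fin α) ⊕ ((V × Fin α) ⊕ Fin α))} [Fintype V]
    (hind : _root_.indepNum G ≤ α) :
    Nat.card {c : ((Galpha G α).induce (Sᶜ : Set _)).ConnectedComponent // P1 G α S c} ≤ α := by
  classical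
  choose fi fj fh hmk using fun c : {c : ((Galpha G α).induce (Sᶜ : Set _)).ConnectedComponent //
    P1 G α S c} => c.2
  have hkey : ∀ c c', (fi c = fi c' ∨ G.Adj (fi c) (fi c')) → c = c' := by
    intro c c' hor
    have : mkc G α S (vA (fi c) (fj c)) (fh c) = mkc G α S (vA (fi c') (fj c')) (fh c') := by
      rcases eq_or_ne (vA (fi c) (fj c) : (V × Fin α) ⊕ ((V × Fin α) ⊕ Fin α))
        (vA (fi c') (fj c')) with he | hne
      · exact mkc_congr _ _ he
      · exact mkc_step _ _ (adj_vv hor (by simpa using hne))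
    have h2 : c.1 = c'.1 := (hmk c).symm.trans (this.trans (hmk c'))
    exact Subtype.ext h2
  have hinj : Function.Injective fi := fun c c' h => hkey c c' (Or.inl h)
  have hpair : (Set.range fi).Pairwise (fun x y => ¬ G.Adj x y) := by
    rintro _ ⟨c, rfl⟩ _ ⟨c', rfl⟩ hne hadj
    exact hne (congrArg fi (hkey c c' (Or.inr hadj)))
  have h1 : Nat.card {c : ((Galpha G α).induce (Sᶜ : Set _)).ConnectedComponent // P1 G α S c}
      = Nat.card (Set.range fi) := Nat.card_congr (Equiv.ofInjective fi hinj)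
  have h2 : Nat.card (Set.range fi) ≤ _root_.indepNum G := by
    apply le_csSup
    · refine ⟨Fintype.card V, ?_⟩
      rintro n ⟨s, -, rfl⟩
      simpa [Nat.card_eq_fintype_card] using
        Nat.card_le_card_of_injective ((↑) : s → V) Subtype.val_injective
    · exact ⟨Set.range fi, hpair, rfl⟩
  omega

lemma key [Fintype V] (hconn : G.Connected)
    (hiso : ∀ v : V, ∃ w : V, G.Adj v w) (hind : _root_.indepNum G ≤ α)
    (S : Set ((V × Fin α) ⊕ ((V × Fin α) ⊕ Fin α)))
    (hcut : 1 < Nat.card ((Galpha G α).induce (Sᶜ : Set _)).ConnectedComponent) :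
    ∃ f : ((Galpha G α).induce (Sᶜ : Set _)).ConnectedComponent →
      (V × Fin α) ⊕ ((V × Fin α) ⊕ Fin α),
      (∀ c, f c ∈ S) ∧ Function.Injective f := by
  classical
  -- pendant data
  choose pi pj ph hpmk hpv hpw using
    fun c (h1 : ¬ P1 G α S c) (h2 : ¬ P2 G α S c) =>
      ((classify c).resolve_left h1).resolve_left h2
  -- hub data
  choose hj hwh hwmk using fun c (h2 : P2 G α S c) => h2
  by_cases hA : ∃ i₀ : V, ∀ j : Fin α, vA i₀ j ∈ S
  · -- Case A
    obtain ⟨i₀, hi₀⟩ := hA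
    obtain ⟨i₁, hadj01⟩ := hiso i₀
    have hne10 : i₁ ≠ i₀ := hadj01.ne'
    have : Fintype {c : ((Galpha G α).induce (Sᶜ : Set _)).ConnectedComponent // P1 G α S c} :=
      Fintype.ofFinite _
    obtain ⟨ψ⟩ : Nonempty ({c : ((Galpha G α).induce (Sᶜ : Set _)).ConnectedComponent //
        P1 G α S c} ↪ Fin α) := by
      apply Function.Embedding.nonempty_of_card_le
      have := coreCard (G := G) (α := α) (S := S) hind
      simpa [Nat.card_eq_fintype_card] using this
    refine ⟨fun c =>
      if h1 : P1 G α S c then vA i₀ (ψ ⟨c, h1⟩)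
      else if h2 : P2 G α S c then
        (if uA i₁ (hj c h2) ∈ S then uA i₁ (hj c h2) else vA i₁ (hj c h2))
      else (if pi c h1 h2 = i₀ then wA (pj c h1 h2) else vA (pi c h1 h2) (pj c h1 h2)),
      ?_, ?_⟩
    · intro c
      beta_reduce
      by_cases h1 : P1 G α S c
      · rw [dif_pos h1]; exact hi₀ _
      · rw [dif_neg h1]
        by_cases h2 : P2 G α S c
        · rw [dif_pos h2]
          by_cases hu : uA i₁ (hj c h2) ∈ S
          · rwa [if_pos hu]
          · rw [if_neg hu]
            exact (hubBlock h1 (hwh c h2) (hwmk c h2) i₁).resolve_left hu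
        · rw [dif_neg h2]
          by_cases hp : pi c h1 h2 = i₀
          · rw [if_pos hp]; exact hpw c h1 h2
          · rw [if_neg hp]; exact hpv c h1 h2
    · intro c c' he
      beta_reduce at he
      by_cases h1 : P1 G α S c <;> by_cases h1' : P1 G α S c'
      · rw [dif_pos h1, dif_pos h1'] at he
        have : ψ ⟨c, h1⟩ = ψ ⟨c', h1'⟩ := by simpa using he
        simpa using congrArg Subtype.val (ψ.injective this)
      · -- c core, c' not
        rw [dif_pos h1, dif_neg h1'] at he
        exfalso
        by_cases h2' : P2 G α S c'
        · rw [dif_pos h2'] at he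
          by_cases hu : uA i₁ (hj c' h2') ∈ S
          · rw [if_pos hu] at he; simp at he
          · rw [if_neg hu] at he
            have : i₀ = i₁ := by
              have := (by simpa using he : i₀ = i₁ ∧ _)
              exact this.1
            exact hne10 this.symm
        · rw [dif_neg h2'] at he
          by_cases hp : pi c' h1' h2' = i₀
          · rw [if_pos hp] at he; simp at he
          · rw [if_neg hp] at he
            have : i₀ = pi c' h1' h2' := by
              have := (by simpa using he : i₀ = pi c' h1' h2' ∧ _)
              exact this.1
            exact hp this.symm
      · -- c not core, c' core
        rw [dif_neg h1, dif_pos h1'] at he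
        exfalso
        by_cases h2 : P2 G α S c
        · rw [dif_pos h2] at he
          by_cases hu : uA i₁ (hj c h2) ∈ S
          · rw [if_pos hu] at he; simp at he
          · rw [if_neg hu] at he
            have : i₁ = i₀ := by
              have := (by simpa using he : i₁ = i₀ ∧ _)
              exact this.1
            exact hne10 this
        · rw [dif_neg h2] at he
          by_cases hp : pi c h1 h2 = i₀
          · rw [if_pos hp] at he; simp at he
          · rw [if_neg hp] at he
            have : pi c h1 h2 = i₀ := by
              have := (by simpa using he : pi c h1 h2 = i₀ ∧ _)
              exact this.1
            exact hp this
      · -- neither core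
        rw [dif_neg h1, dif_neg h1'] at he
        by_cases h2 : P2 G α S c <;> by_cases h2' : P2 G α S c'
        · rw [dif_pos h2, dif_pos h2'] at he
          have hjj : hj c h2 = hj c' h2' := by
            by_cases hu : uA i₁ (hj c h2) ∈ S <;> by_cases hu' : uA i₁ (hj c' h2') ∈ S <;>
              simp [hu, hu'] at he <;> tauto
          rw [← hwmk c h2, ← hwmk c' h2']
          exact mkc_congr _ _ (by rw [hjj])
        · -- c hub, c' pendant
          rw [dif_pos h2, dif_neg h2'] at he
          exfalso
          by_cases hu : uA i₁ (hj c h2) ∈ S <;> by_cases hp : pi c' h1' h2' = i₀ <;>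
            simp [hu, hp] at he
          · -- v = v case: columns equal
            obtain ⟨-, hcol⟩ := he
            have := hpw c' h1' h2'
            rw [← hcol] at this
            exact (hwh c h2) this
        · -- c pendant, c' hub
          rw [dif_neg h2, dif_pos h2'] at he
          exfalso
          by_cases hu : uA i₁ (hj c' h2') ∈ S <;> by_cases hp : pi c h1 h2 = i₀ <;>
            simp [hu, hp] at he
          · obtain ⟨-, hcol⟩ := he
            have := hpw c h1 h2
            rw [hcol] at this
            exact (hwh c' h2') this
        · -- both pendants
          rw [dif_neg h2, dif_neg h2'] at he
          by_cases hp : pi c h1 h2 = i₀ <;> by_cases hp' : pi c' h1' h2' = i₀ <;>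
            simp [hp, hp'] at he
          · -- w = w : columns equal
            rw [← hpmk c h1 h2, ← hpmk c' h1' h2']
            exact mkc_congr _ _ (by rw [hp, hp', he])
          · -- v = v
            obtain ⟨hi, hcol⟩ := he
            rw [← hpmk c h1 h2, ← hpmk c' h1' h2']
            exact mkc_congr _ _ (by rw [hi, hcol])
  · -- Case B
    push_neg at hA
    obtain ⟨i₁⟩ := hconn.nonempty
    obtain ⟨i₂, hadj12⟩ := hiso i₁
    have hne21 : i₂ ≠ i₁ := hadj12.ne'
    obtain ⟨j₁, hj₁⟩ := hA i₁
    set c₀ := mkc G α S (vA i₁ j₁) hj₁ with hc₀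
    have hP1c : ∀ c, P1 G α S c → c = c₀ := by
      rintro c ⟨i, j, h, rfl⟩
      exact coreConnB hconn hA h hj₁
    have hnt : Nontrivial ((Galpha G α).induce (Sᶜ : Set _)).ConnectedComponent :=
      Finite.one_lt_card_iff_nontrivial.mp hcut
    obtain ⟨d, hd⟩ := exists_ne c₀
    have hd1 : ¬ P1 G α S d := fun h => hd (hP1c d h)
    obtain ⟨sp, hspS, hsp⟩ :
        ∃ sp : (V × Fin α) ⊕ ((V × Fin α) ⊕ Fin α), sp ∈ S ∧
          ((∃ jj, wA jj ∉ S ∧ (sp = uA i₂ jj ∨ sp = vA i₂ jj)) ∨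
            (∃ jj, wA jj ∈ S ∧ sp = wA jj)) := by
      by_cases hd2 : P2 G α S d
      · rcases hubBlock hd1 (hwh d hd2) (hwmk d hd2) i₂ with hu | hv
        · exact ⟨uA i₂ (hj d hd2), hu, Or.inl ⟨hj d hd2, hwh d hd2, Or.inl rfl⟩⟩
        · exact ⟨vA i₂ (hj d hd2), hv, Or.inl ⟨hj d hd2, hwh d hd2, Or.inr rfl⟩⟩
      · exact ⟨wA (pj d hd1 hd2), hpw d hd1 hd2, Or.inr ⟨pj d hd1 hd2, hpw d hd1 hd2, rfl⟩⟩
    refine ⟨fun c =>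
      if hc : c = c₀ then sp
      else if h2 : P2 G α S c then
        (if uA i₁ (hj c h2) ∈ S then uA i₁ (hj c h2) else vA i₁ (hj c h2))
      else vA (pi c (fun h => hc (hP1c c h)) h2) (pj c (fun h => hc (hP1c c h)) h2),
      ?_, ?_⟩
    · intro c
      beta_reduce
      by_cases hc : c = c₀
      · rw [dif_pos hc]; exact hspS
      · rw [dif_neg hc]
        by_cases h2 : P2 G α S c
        · rw [dif_pos h2]
          by_cases hu : uA i₁ (hj c h2) ∈ S
          · rwa [if_pos hu]
          · rw [if_neg hu]
            exact (hubBlock (fun h => hc (hP1c c h)) (hwh c h2) (hwmk c h2) i₁).resolve_left hu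
        · rw [dif_neg h2]; exact hpv c _ h2
    · intro c c' he
      beta_reduce at he
      by_cases hc : c = c₀ <;> by_cases hc' : c' = c₀
      · exact hc.trans hc'.symm
      · rw [dif_pos hc, dif_neg hc'] at he
        exfalso
        by_cases h2' : P2 G α S c'
        · rw [dif_pos h2'] at he
          by_cases hu : uA i₁ (hj c' h2') ∈ S
          · rw [if_pos hu] at he
            rcases hsp with ⟨jj, hjjS, hsp2 | hsp2⟩ | ⟨jj, hjjS, hsp2⟩ <;> subst hsp2
            · have := (by simpa using he : i₂ = i₁ ∧ _)
              exact hne21 this.1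
            · simp at he
            · simp at he
          · rw [if_neg hu] at he
            rcases hsp with ⟨jj, hjjS, hsp2 | hsp2⟩ | ⟨jj, hjjS, hsp2⟩ <;> subst hsp2
            · simp at he
            · have := (by simpa using he : i₂ = i₁ ∧ _)
              exact hne21 this.1
            · simp at he
        · rw [dif_neg h2'] at he
          rcases hsp with ⟨jj, hjjS, hsp2 | hsp2⟩ | ⟨jj, hjjS, hsp2⟩ <;> subst hsp2
          · simp at he
          · have := (by simpa using he : i₂ = _ ∧ jj = _)
            exact hjjS (this.2 ▸ hpw c' _ h2')
          · simp at he
      · rw [dif_neg hc, dif_pos hc'] at he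
        exfalso
        by_cases h2 : P2 G α S c
        · rw [dif_pos h2] at he
          by_cases hu : uA i₁ (hj c h2) ∈ S
          · rw [if_pos hu] at he
            rcases hsp with ⟨jj, hjjS, hsp2 | hsp2⟩ | ⟨jj, hjjS, hsp2⟩ <;> subst hsp2
            · have := (by simpa using he : i₁ = i₂ ∧ _)
              exact hne21 this.1.symm
            · simp at he
            · simp at he
          · rw [if_neg hu] at he
            rcases hsp with ⟨jj, hjjS, hsp2 | hsp2⟩ | ⟨jj, hjjS, hsp2⟩ <;> subst hsp2
            · simp at he
            · have := (by simpa using he : i₁ = i₂ ∧ _)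
              exact hne21 this.1.symm
            · simp at he
        · rw [dif_neg h2] at he
          rcases hsp with ⟨jj, hjjS, hsp2 | hsp2⟩ | ⟨jj, hjjS, hsp2⟩ <;> subst hsp2
          · simp at he
          · have := (by simpa using he : _ = i₂ ∧ _ = jj)
            exact hjjS (this.2 ▸ hpw c _ h2)
          · simp at he
      · rw [dif_neg hc, dif_neg hc'] at he
        by_cases h2 : P2 G α S c <;> by_cases h2' : P2 G α S c'
        · rw [dif_pos h2, dif_pos h2'] at he
          have hjj : hj c h2 = hj c' h2' := by
            by_cases hu : uA i₁ (hj c h2) ∈ S <;> by_cases hu' : uA i₁ (hj c' h2') ∈ S <;>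
              simp [hu, hu'] at he <;> tauto
          rw [← hwmk c h2, ← hwmk c' h2']
          exact mkc_congr _ _ (by rw [hjj])
        · rw [dif_pos h2, dif_neg h2'] at he
          exfalso
          by_cases hu : uA i₁ (hj c h2) ∈ S
          · rw [if_pos hu] at he; simp at he
          · rw [if_neg hu] at he
            have := (by simpa using he : i₁ = _ ∧ hj c h2 = _)
            exact (hwh c h2) (this.2 ▸ hpw c' _ h2')
        · rw [dif_neg h2, dif_pos h2'] at he
          exfalso
          by_cases hu : uA i₁ (hj c' h2') ∈ S
          · rw [if_pos hu] at he; simp at he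
          · rw [if_neg hu] at he
            have := (by simpa using he : _ = i₁ ∧ _ = hj c' h2')
            exact (hwh c' h2') (this.2 ▸ hpw c _ h2)
        · rw [dif_neg h2, dif_neg h2'] at he
          have := (by simpa using he : pi c _ h2 = pi c' _ h2' ∧ pj c _ h2 = pj c' _ h2')
          rw [← hpmk c (fun h => hc (hP1c c h)) h2, ← hpmk c' (fun h => hc' (hP1c c' h)) h2']
          exact mkc_congr _ _ (by rw [this.1, this.2])

end Stmt10Aux

theorem stmt10 {V : Type*} [Fintype V] (G : SimpleGraph V) (α : ℕ)
    (hα : 0 < α) (hconn : G.Connected)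
    (hiso : ∀ v : V, ∃ w : V, G.Adj v w)
    (hind : _root_.indepNum G ≤ α) :
    IsTTough 1 (Galpha G α) := by
  intro S hS
  obtain ⟨f, hfS, hfinj⟩ := Stmt10Aux.key hconn hiso hind S hS
  have hle : numComp (Galpha G α) S ≤ Nat.card S :=
    Nat.card_le_card_of_injective (fun c => (⟨f c, hfS c⟩ : S))
      (fun a b h => hfinj (by simpa using congrArg Subtype.val h))
  rw [one_mul]
  exact_mod_cast hle
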